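/- arXiv:1612.02349 — 2 statements merged into one kernel-verified Lean document; each statement's English description precedes it below -/
import Mathlib

section
/- Let G be a finite group that is the product G = AB of two supersoluble subgroups A and B (no permutability assumption beyond G = AB). Then the supersoluble residual of G is contained in [A,B], i.e. G^𝔘 ≤ [A,B]. -/
open Pointwise

universe u

/-- A group is *supersoluble* if it has a normal series (each term normal in the
whole group) all of whose factors are cyclic. -/
def IsSupersoluble (G : Type u) [Group G] : Prop :=
  ∃ (n : ℕ) (s : Fin (n + 1) → Subgroup G) (_ : ∀ i, (s i).Normal),
    s 0 = ⊥ ∧ s (Fin.last n) = ⊤ ∧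
      (∀ i : Fin n, s i.castSucc ≤ s i.succ) ∧
      ∀ i : Fin n,
        IsCyclic (Subgroup.map (QuotientGroup.mk' (s i.castSucc)) (s i.succ))

/-- The `𝔉`-residual of `G` for a class of groups `P`: the smallest normal subgroup
of `G` whose quotient satisfies `P`. -/
def groupResidual (P : (H : Type u) → [Group H] → Prop) (G : Type u) [Group G] :
    Subgroup G :=
  sInf {N : Subgroup G | ∃ _ : N.Normal, P (G ⧸ N)}

/-- The supersoluble residual `G^𝔘`. -/
abbrev supersolubleResidual (G : Type u) [Group G] : Subgroup G :=
  groupResidual (fun H _ => IsSupersoluble H) G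

/-- The nilpotent residual `G^𝔑`. -/
abbrev nilpotentResidual (G : Type u) [Group G] : Subgroup G :=
  groupResidual (fun H _ => Group.IsNilpotent H) G

/-- `G` is the *mutually permutable* product of its subgroups `A` and `B` when
`UB = BU` for every `U ≤ A` and `AV = VA` for every `V ≤ B`. -/
def MutuallyPermutable {G : Type u} [Group G] (A B : Subgroup G) : Prop :=
  (∀ U : Subgroup G, U ≤ A → (U : Set G) * (B : Set G) = (B : Set G) * (U : Set G)) ∧
  (∀ V : Subgroup G, V ≤ B → (A : Set G) * (V : Set G) = (V : Set G) * (A : Set G))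

/-- A group is *`p`-supersoluble* if every chief factor (a maximal gap `N < M`
between normal subgroups of `G`) whose order is divisible by `p` has order
exactly `p`. -/
def IsPSupersoluble (p : ℕ) (G : Type u) [Group G] : Prop :=
  ∀ N M : Subgroup G, N.Normal → M.Normal → N < M →
    (∀ K : Subgroup G, K.Normal → N ≤ K → K ≤ M → K = N ∨ K = M) →
    (p ∣ N.relIndex M → N.relIndex M = p)

/-- A group is *`p`-nilpotent* if it has a normal Hall `p'`-subgroup, i.e. a
normal subgroup of order coprime to `p` and of `p`-power index. -/
def IsPNilpotent (p : ℕ) (G : Type u) [Group G] : Prop :=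
  ∃ N : Subgroup G, N.Normal ∧ ¬ p ∣ Nat.card N ∧ ∃ k : ℕ, N.index = p ^ k

/-- The `p`-supersoluble residual `G^{p𝔘}`. -/
abbrev pSupersolubleResidual (p : ℕ) (G : Type u) [Group G] : Subgroup G :=
  groupResidual (fun H _ => IsPSupersoluble p H) G

/-- The `p`-nilpotent residual `G^{𝔈_{p'}𝔑_p}`. -/
abbrev pNilpotentResidual (p : ℕ) (G : Type u) [Group G] : Subgroup G :=
  groupResidual (fun H _ => IsPNilpotent p H) G

section Aux

open Subgroup QuotientGroup

namespace SSaux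

variable {G : Type u} [Group G]

lemma isCyclic_map {H : Type u} [Group H] (f : G →* H) (C : Subgroup G) [IsCyclic C] :
    IsCyclic (C.map f) :=
  isCyclic_of_surjective (f.subgroupMap C) (f.subgroupMap_surjective C)

lemma isCyclic_of_forall_mem {N : Subgroup G} (T : Subgroup G) [N.Normal]
    (C : Subgroup (G ⧸ N)) (hC : IsCyclic C)
    (h : ∀ x ∈ T, QuotientGroup.mk' N x ∈ C) :
    IsCyclic (T.map (QuotientGroup.mk' N)) := by
  haveI := hC
  refine Subgroup.isCyclic_of_le (H' := C) ?_
  rintro _ ⟨x, hx, rfl⟩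
  exact h x hx

lemma isCyclic_congr {N N' T T' : Subgroup G} [hN : N.Normal] [hN' : N'.Normal]
    (e1 : N = N') (e2 : T = T')
    (h : IsCyclic (T'.map (QuotientGroup.mk' N'))) :
    IsCyclic (T.map (QuotientGroup.mk' N)) := by
  subst e1; subst e2; exact h

/-- An ℕ-indexed supersoluble chain. -/
def ChainOK (n : ℕ) (s : ℕ → Subgroup G) : Prop :=
  ∃ hn : ∀ i, (s i).Normal, s 0 = ⊥ ∧ s n = ⊤ ∧ (∀ i, s i ≤ s (i + 1)) ∧
    ∀ i, IsCyclic ((s (i + 1)).map (@QuotientGroup.mk' _ _ (s i) (hn i)))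

lemma isCyclic_map_mk'_self (N : Subgroup G) [N.Normal] :
    IsCyclic (N.map (QuotientGroup.mk' N)) := by
  have h : N.map (QuotientGroup.mk' N) = ⊥ := by
    rw [eq_bot_iff]
    rintro _ ⟨x, hx, rfl⟩
    simpa [Subgroup.mem_bot] using (QuotientGroup.eq_one_iff x).mpr hx
  rw [h]; infer_instance

lemma chain_of_isSupersoluble (h : IsSupersoluble G) : ∃ n s, ChainOK (G := G) n s := by
  obtain ⟨n, s, hn, h0, htop, hle, hcyc⟩ := h
  refine ⟨n, fun i => s ⟨min i n, Nat.lt_succ_of_le (Nat.min_le_right _ _)⟩, fun i => hn _,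
    ?_, ?_, ?_, ?_⟩
  · convert h0 using 2
    exact Fin.ext (by simp)
  · convert htop using 2
    exact Fin.ext (by simp [Fin.last])
  · intro i
    rcases lt_or_ge i n with hi | hi
    · have e1 : (⟨min i n, Nat.lt_succ_of_le (Nat.min_le_right _ _)⟩ : Fin (n+1)) =
        (⟨i, hi⟩ : Fin n).castSucc := Fin.ext (by simp [Nat.min_eq_left hi.le])
      have e2 : (⟨min (i+1) n, Nat.lt_succ_of_le (Nat.min_le_right _ _)⟩ : Fin (n+1)) =
        (⟨i, hi⟩ : Fin n).succ := Fin.ext (by simp [Nat.min_eq_left hi])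
      exact (congrArg s e1).le.trans ((hle ⟨i, hi⟩).trans (congrArg s e2).ge)
    · exact le_of_eq (congrArg s (Fin.ext (show (min i n : ℕ) = min (i+1) n by omega)))
  · intro i
    rcases lt_or_ge i n with hi | hi
    · have e1 : (⟨min i n, Nat.lt_succ_of_le (Nat.min_le_right _ _)⟩ : Fin (n+1)) =
        (⟨i, hi⟩ : Fin n).castSucc := Fin.ext (by simp [Nat.min_eq_left hi.le])
      have e2 : (⟨min (i+1) n, Nat.lt_succ_of_le (Nat.min_le_right _ _)⟩ : Fin (n+1)) =
        (⟨i, hi⟩ : Fin n).succ := Fin.ext (by simp [Nat.min_eq_left hi])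
      haveI := hn ((⟨i, hi⟩ : Fin n).castSucc)
      exact isCyclic_congr (congrArg s e1) (congrArg s e2) (hcyc ⟨i, hi⟩)
    · have e : (⟨min (i+1) n, Nat.lt_succ_of_le (Nat.min_le_right _ _)⟩ : Fin (n+1)) =
        ⟨min i n, Nat.lt_succ_of_le (Nat.min_le_right _ _)⟩ := Fin.ext (by simp; omega)
      haveI := hn (⟨min i n, Nat.lt_succ_of_le (Nat.min_le_right _ _)⟩ : Fin (n+1))
      exact isCyclic_congr rfl (congrArg s e) (isCyclic_map_mk'_self _)

lemma isSupersoluble_of_chain {n : ℕ} {s : ℕ → Subgroup G} (h : ChainOK n s) :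
    IsSupersoluble G := by
  obtain ⟨hn, h0, htop, hle, hcyc⟩ := h
  refine ⟨n, fun i => s i.val, fun i => hn _, h0, htop, fun i => hle i.val, fun i => ?_⟩
  haveI := hn i.val
  exact isCyclic_congr (N' := s i.val) (T' := s (i.val + 1)) rfl rfl (hcyc i.val)

/-- Quotient (surjective-image) closure. -/
lemma chain_map {H : Type u} [Group H] (f : G →* H) (hf : Function.Surjective f)
    {n : ℕ} {s : ℕ → Subgroup G} (h : ChainOK n s) :
    ChainOK (G := H) n (fun i => (s i).map f) := by
  obtain ⟨hn, h0, htop, hle, hcyc⟩ := h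
  refine ⟨fun i => (hn i).map f hf, by simp [h0], by simp [htop, Subgroup.map_top_of_surjective f hf],
    fun i => Subgroup.map_mono (hle i), fun i => ?_⟩
  haveI := hn i
  haveI : ((s i).map f).Normal := (hn i).map f hf
  set φ : (G ⧸ s i) →* (H ⧸ (s i).map f) :=
    QuotientGroup.map (s i) ((s i).map f) f
      (Subgroup.map_le_iff_le_comap.mp le_rfl) with hφ
  haveI := hcyc i
  refine isCyclic_of_forall_mem _ (((s (i+1)).map (QuotientGroup.mk' (s i))).map φ)
    (isCyclic_map φ _) ?_
  rintro _ ⟨y, hy, rfl⟩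
  have : (QuotientGroup.mk' ((s i).map f)) (f y) = φ ((QuotientGroup.mk' (s i)) y) := rfl
  rw [this]
  exact Subgroup.mem_map_of_mem φ (Subgroup.mem_map_of_mem _ hy)

/-- Direct product of chains. -/
lemma chain_prod {X Y : Type u} [Group X] [Group Y]
    {n : ℕ} {s : ℕ → Subgroup X} {m : ℕ} {t : ℕ → Subgroup Y}
    (hs : ChainOK n s) (ht : ChainOK m t) :
    ∃ u, ChainOK (G := X × Y) (n + m) u := by
  obtain ⟨hns, h0s, htops, hles, hcycs⟩ := hs
  obtain ⟨hnt, h0t, htopt, hlet, hcyct⟩ := ht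
  set u : ℕ → Subgroup (X × Y) := fun i =>
    if i ≤ n then (s i).prod ⊥ else (⊤ : Subgroup X).prod (t (i - n)) with hu
  have hstop : ∀ i, n ≤ i → s i = ⊤ := fun i hi =>
    top_le_iff.mp (htops ▸ monotone_nat_of_le_succ hles hi)
  have hlow : ∀ i, i ≤ n → u i = (s i).prod ⊥ := fun i hi => if_pos hi
  have hhigh : ∀ i, n ≤ i → u i = (⊤ : Subgroup X).prod (t (i - n)) := by
    intro i hi
    by_cases h : i ≤ n
    · have : i = n := le_antisymm h hi
      subst this
      rw [hlow i le_rfl, hstop i le_rfl]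
      simp [h0t]
    · exact if_neg h
  have hnorm : ∀ i, (u i).Normal := by
    intro i
    have : ∀ (K : Subgroup X) (L : Subgroup Y), K.Normal → L.Normal → (K.prod L).Normal := by
      intro K L hK hL
      constructor
      rintro ⟨x, y⟩ hm ⟨a, b⟩
      rw [Subgroup.mem_prod] at hm ⊢
      exact ⟨hK.conj_mem _ hm.1 _, hL.conj_mem _ hm.2 _⟩
    by_cases h : i ≤ n
    · rw [hlow i h]; exact this _ _ (hns i) inferInstance
    · rw [hhigh i (le_of_not_ge h)]; exact this _ _ inferInstance (hnt _)
  refine ⟨u, hnorm, ?_, ?_, ?_, ?_⟩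
  · rw [hlow 0 (Nat.zero_le _), h0s, Subgroup.bot_prod_bot]
  · rw [hhigh (n+m) (Nat.le_add_right _ _), Nat.add_sub_cancel_left, htopt,
      Subgroup.top_prod_top]
  · intro i
    by_cases h : i + 1 ≤ n
    · rw [hlow i (by omega), hlow (i+1) h]
      exact Subgroup.prod_mono (hles i) le_rfl
    · have hi : n ≤ i := by omega
      rw [hhigh i hi, hhigh (i+1) (by omega)]
      have : i + 1 - n = (i - n) + 1 := by omega
      rw [this]
      exact Subgroup.prod_mono le_rfl (hlet _)
  · intro i
    haveI := hnorm i
    by_cases h : i + 1 ≤ n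
    · haveI := hns i
      haveI : ((s i).prod (⊥ : Subgroup Y)).Normal := by
        rw [← hlow i (by omega)]; infer_instance
      refine isCyclic_congr (hlow i (by omega)) (hlow (i+1) h) ?_
      set φ : (X ⧸ s i) →* ((X × Y) ⧸ (s i).prod (⊥ : Subgroup Y)) :=
        QuotientGroup.map (s i) ((s i).prod ⊥) (MonoidHom.inl X Y)
          (by intro x hx
              simp only [Subgroup.mem_comap, MonoidHom.inl_apply, Subgroup.mem_prod]
              exact ⟨hx, Subgroup.one_mem _⟩) with hφ
      haveI := hcycs i
      refine isCyclic_of_forall_mem _ (((s (i+1)).map (QuotientGroup.mk' (s i))).map φ)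
        (isCyclic_map φ _) ?_
      rintro ⟨x, y⟩ hxy
      rw [Subgroup.mem_prod] at hxy
      have hy1 : y = 1 := Subgroup.mem_bot.mp hxy.2
      subst hy1
      have : (QuotientGroup.mk' ((s i).prod (⊥ : Subgroup Y))) (x, 1) =
          φ ((QuotientGroup.mk' (s i)) x) := rfl
      rw [this]
      exact Subgroup.mem_map_of_mem φ (Subgroup.mem_map_of_mem _ hxy.1)
    · have hi : n ≤ i := by omega
      haveI := hnt (i - n)
      haveI : ((⊤ : Subgroup X).prod (t (i - n))).Normal := by
        rw [← hhigh i hi]; infer_instance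
      have e2 : u (i+1) = (⊤ : Subgroup X).prod (t ((i - n) + 1)) := by
        rw [hhigh (i+1) (by omega)]
        congr 2
        omega
      refine isCyclic_congr (hhigh i hi) e2 ?_
      set j := i - n with hj
      set φ : (Y ⧸ t j) →* ((X × Y) ⧸ (⊤ : Subgroup X).prod (t j)) :=
        QuotientGroup.map (t j) ((⊤ : Subgroup X).prod (t j)) (MonoidHom.inr X Y)
          (by intro y hy
              simp only [Subgroup.mem_comap, MonoidHom.inr_apply, Subgroup.mem_prod]
              exact ⟨trivial, hy⟩) with hφ
      haveI := hcyct j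
      refine isCyclic_of_forall_mem _ (((t (j+1)).map (QuotientGroup.mk' (t j))).map φ)
        (isCyclic_map φ _) ?_
      rintro ⟨x, y⟩ hxy
      rw [Subgroup.mem_prod] at hxy
      have key : (QuotientGroup.mk' ((⊤ : Subgroup X).prod (t j))) (x, y) =
          φ ((QuotientGroup.mk' (t j)) y) := by
        have : φ ((QuotientGroup.mk' (t j)) y) =
            (QuotientGroup.mk' ((⊤ : Subgroup X).prod (t j))) (1, y) := rfl
        rw [this]
        apply (QuotientGroup.mk'_eq_mk' _).mpr
        refine ⟨⟨x⁻¹, 1⟩, ?_, ?_⟩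
        · rw [Subgroup.mem_prod]; exact ⟨trivial, Subgroup.one_mem _⟩
        · ext <;> simp
      rw [key]
      exact Subgroup.mem_map_of_mem φ (Subgroup.mem_map_of_mem _ hxy.2)

end SSaux

end Aux

section Main

open Subgroup QuotientGroup
open scoped commutatorElement

lemma SSaux.conj_mem_commutator {G : Type u} [Group G] {A B : Subgroup G} {h x : G}
    (hh : h ∈ A) (hx : x ∈ ⁅A, B⁆) : h * x * h⁻¹ ∈ ⁅A, B⁆ := by
  have key : ⁅A, B⁆.map (MulAut.conj h).toMonoidHom ≤ ⁅A, B⁆ := by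
    rw [Subgroup.commutator_def, MonoidHom.map_closure, Subgroup.closure_le]
    rintro _ ⟨_, ⟨a, ha, b, hb, rfl⟩, rfl⟩
    have e : (MulAut.conj h).toMonoidHom ⁅a, b⁆ = ⁅h * a, b⁆ * ⁅h, b⁆⁻¹ := by
      simp only [MulEquiv.coe_toMonoidHom, MulAut.conj_apply, commutatorElement_def]
      group
    rw [SetLike.mem_coe, e]
    exact mul_mem (Subgroup.commutator_mem_commutator (mul_mem hh ha) hb)
      (inv_mem (Subgroup.commutator_mem_commutator hh hb))
  have : (MulAut.conj h).toMonoidHom x ∈ ⁅A, B⁆ := key (Subgroup.mem_map_of_mem _ hx)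
  simpa [mul_assoc] using this

theorem supersolubleResidual_le_commutator_of_product'
    {G : Type u} [Group G] [Finite G] (A B : Subgroup G)
    (hprod : (A : Set G) * (B : Set G) = Set.univ)
    (hA : IsSupersoluble ↥A) (hB : IsSupersoluble ↥B) :
    supersolubleResidual G ≤ ⁅A, B⁆ := by
  set N := ⁅A, B⁆ with hNdef
  have hmem : ∀ g : G, ∃ a ∈ A, ∃ b ∈ B, a * b = g := by
    intro g
    have : g ∈ (A : Set G) * (B : Set G) := hprod ▸ Set.mem_univ g
    exact Set.mem_mul.mp this
  have hBconj : ∀ h ∈ B, ∀ x ∈ N, h * x * h⁻¹ ∈ N := by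
    intro h hh x hx
    rw [hNdef, Subgroup.commutator_comm] at hx ⊢
    exact SSaux.conj_mem_commutator hh hx
  haveI hNn : N.Normal := by
    constructor
    intro x hx g
    obtain ⟨a, ha, b, hb, rfl⟩ := hmem g
    have h1 : b * x * b⁻¹ ∈ N := hBconj b hb x hx
    have h2 : a * (b * x * b⁻¹) * a⁻¹ ∈ N := SSaux.conj_mem_commutator ha h1
    have e : a * (b * x * b⁻¹) * a⁻¹ = a * b * x * (a * b)⁻¹ := by group
    rwa [e] at h2
  -- the surjection (A × B) → G ⧸ N
  have hcomm : ∀ (a : ↥A) (b : ↥B),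
      Commute (((QuotientGroup.mk' N).comp A.subtype) a)
        (((QuotientGroup.mk' N).comp B.subtype) b) := by
    rintro ⟨a, ha⟩ ⟨b, hb⟩
    show QuotientGroup.mk' N a * QuotientGroup.mk' N b =
      QuotientGroup.mk' N b * QuotientGroup.mk' N a
    rw [← map_mul, ← map_mul]
    apply (QuotientGroup.mk'_eq_mk' _).mpr
    refine ⟨⁅a⁻¹, b⁻¹⁆⁻¹,
      inv_mem (Subgroup.commutator_mem_commutator (inv_mem ha) (inv_mem hb)), ?_⟩
    simp only [commutatorElement_def]
    group
  set f : (↥A × ↥B) →* (G ⧸ N) :=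
    MonoidHom.noncommCoprod ((QuotientGroup.mk' N).comp A.subtype)
      ((QuotientGroup.mk' N).comp B.subtype) hcomm with hf
  have hfs : Function.Surjective f := by
    intro q
    obtain ⟨g, rfl⟩ := QuotientGroup.mk'_surjective N q
    obtain ⟨a, ha, b, hb, rfl⟩ := hmem g
    exact ⟨(⟨a, ha⟩, ⟨b, hb⟩), by simp [hf, MonoidHom.noncommCoprod_apply]⟩
  -- supersolubility of the quotient
  obtain ⟨nA, sA, hsA⟩ := SSaux.chain_of_isSupersoluble hA
  obtain ⟨nB, sB, hsB⟩ := SSaux.chain_of_isSupersoluble hB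
  obtain ⟨uu, huu⟩ := SSaux.chain_prod hsA hsB
  have hQ : IsSupersoluble (G ⧸ N) :=
    SSaux.isSupersoluble_of_chain (SSaux.chain_map f hfs huu)
  exact sInf_le ⟨hNn, hQ⟩

end Main

/-- **Lemma 4.** If the finite group `G = AB` is the product of supersoluble
subgroups `A` and `B`, then `G^𝔘 ≤ [A,B]`. -/
theorem supersolubleResidual_le_commutator_of_product
    {G : Type u} [Group G] [Finite G] (A B : Subgroup G)
    (hprod : (A : Set G) * (B : Set G) = Set.univ)
    (hA : IsSupersoluble ↥A) (hB : IsSupersoluble ↥B) :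
    supersolubleResidual G ≤ ⁅A, B⁆ :=
  supersolubleResidual_le_commutator_of_product' A B hprod hA hB
end

section
/- Let G be a finite group that is the product G = AB of two supersoluble subgroups A and B. Then the derived subgroup of the quotient G/[A,B] is nilpotent; equivalently, G'[A,B]/[A,B] is nilpotent. -/
open Pointwise

universe u

open scoped commutatorElement

section AuxLemmas

/-- Automorphisms of a cyclic group commute. -/
lemma mulAut_commute_of_isCyclic {C : Type*} [Group C] (hc : IsCyclic C)
    (σ τ : MulAut C) : σ * τ = τ * σ := by
  obtain ⟨g, hg⟩ := hc.exists_generator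
  obtain ⟨a, ha⟩ := Subgroup.mem_zpowers_iff.mp (hg (σ g))
  obtain ⟨b, hb⟩ := Subgroup.mem_zpowers_iff.mp (hg (τ g))
  apply MulEquiv.ext
  intro x
  obtain ⟨n, rfl⟩ := Subgroup.mem_zpowers_iff.mp (hg x)
  have hστ : ∀ (ρ : MulAut C) (k : ℤ), ρ (g ^ k) = (ρ g) ^ k := fun ρ k => map_zpow ρ g k
  have e1 : σ (τ (g ^ n)) = g ^ (a * (b * n)) := by
    rw [hστ, ← hb, ← zpow_mul, hστ, ← ha, ← zpow_mul]
  have e2 : τ (σ (g ^ n)) = g ^ (b * (a * n)) := by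
    rw [hστ, ← ha, ← zpow_mul, hστ, ← hb, ← zpow_mul]
  rw [MulAut.mul_apply, MulAut.mul_apply, e1, e2,
    show a * (b * n) = b * (a * n) by ring]

/-- A commutator element conjugates trivially on a cyclic normal subgroup. -/
lemma commutator_conj_eq_of_cyclic_normal {Q : Type*} [Group Q] (C : Subgroup Q)
    [C.Normal] (hc : IsCyclic ↥C) (x y : Q) {c : Q} (hcC : c ∈ C) :
    ⁅x, y⁆ * c * ⁅x, y⁆⁻¹ = c := by
  have h : MulAut.conjNormal (H := C) ⁅x, y⁆ = 1 := by
    rw [map_commutatorElement]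
    exact commutatorElement_eq_one_iff_commute.mpr
      (mulAut_commute_of_isCyclic hc (MulAut.conjNormal x) (MulAut.conjNormal y))
  have := congrArg (fun σ : MulAut ↥C => ((σ ⟨c, hcC⟩ : ↥C) : Q)) h
  simpa [MulAut.conjNormal_apply, -map_commutatorElement] using this

/-- The derived subgroup of a supersoluble group is nilpotent. -/
lemma isNilpotent_commutator_of_isSupersoluble {G : Type u} [Group G]
    (h : IsSupersoluble G) : Group.IsNilpotent ↥(commutator G) := by
  classical
  obtain ⟨n, s, hnorm, h0, hlast, _hmono, hcyc⟩ := h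
  haveI : ∀ i, (s i).Normal := hnorm
  -- key step: the derived subgroup centralizes every factor of the series
  have key : ∀ i : Fin n, ∀ g ∈ commutator G, ∀ m ∈ s i.succ,
      g * m * g⁻¹ * m⁻¹ ∈ s i.castSucc := by
    intro i
    set N := s i.castSucc with hNdef
    set π := QuotientGroup.mk' N with hπ
    set C : Subgroup (G ⧸ N) := (s i.succ).map π with hC
    haveI : C.Normal := Subgroup.Normal.map (hnorm i.succ) π (QuotientGroup.mk'_surjective N)
    have hCcyc : IsCyclic ↥C := hcyc i
    have hle : commutator G ≤ (Subgroup.centralizer (C : Set (G ⧸ N))).comap π := by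
      rw [commutator_def, Subgroup.commutator_le]
      intro g₁ _ g₂ _
      rw [Subgroup.mem_comap, Subgroup.mem_centralizer_iff]
      intro c hcC
      have hconj := commutator_conj_eq_of_cyclic_normal C hCcyc (π g₁) (π g₂) hcC
      have : π ⁅g₁, g₂⁆ * c * (π ⁅g₁, g₂⁆)⁻¹ = c := by
        rwa [map_commutatorElement]
      calc c * π ⁅g₁, g₂⁆ = (π ⁅g₁, g₂⁆ * c * (π ⁅g₁, g₂⁆)⁻¹) * π ⁅g₁, g₂⁆ := by rw [this]
        _ = π ⁅g₁, g₂⁆ * c := by group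
    intro g hg m hm
    have hgc : π g ∈ Subgroup.centralizer (C : Set (G ⧸ N)) := hle hg
    have hmC : π m ∈ C := Subgroup.mem_map_of_mem π hm
    have hcomm : π m * π g = π g * π m := Subgroup.mem_centralizer_iff.mp hgc (π m) hmC
    have h1 : π ⁅g, m⁆ = 1 := by
      rw [map_commutatorElement]
      exact commutatorElement_eq_one_iff_commute.mpr hcomm.symm
    have hker : ⁅g, m⁆ ∈ π.ker := h1
    rw [hπ, QuotientGroup.ker_mk'] at hker
    rwa [commutatorElement_def] at hker
  -- build a descending central series for the derived subgroup
  set H := commutator G with hH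
  rw [nilpotent_iff_finite_descending_central_series]
  refine ⟨n, fun k => (s ⟨n - k, by omega⟩).subgroupOf H, ⟨?_, ?_⟩, ?_⟩
  · have h : (⟨n - 0, by omega⟩ : Fin (n + 1)) = Fin.last n := by
      ext; simp
    show (s ⟨n - 0, by omega⟩).subgroupOf H = ⊤
    rw [h, hlast, Subgroup.top_subgroupOf]
  · intro x k hx g
    simp only [Subgroup.mem_subgroupOf] at hx ⊢
    by_cases hk : k < n
    · have hidx : (⟨n - (k + 1), by omega⟩ : Fin (n + 1))
          = (⟨n - (k + 1), by omega⟩ : Fin n).castSucc := rfl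
      have hidx2 : (⟨n - k, by omega⟩ : Fin (n + 1))
          = (⟨n - (k + 1), by omega⟩ : Fin n).succ := by
        ext; simp; omega
      rw [hidx2] at hx
      have hmem := key ⟨n - (k + 1), by omega⟩ (↑g) g.2 (↑x) hx
      rw [hidx]
      have : ((x * g * x⁻¹ * g⁻¹ : ↥H) : G)
          = ((↑g * ↑x * (↑g)⁻¹ * (↑x)⁻¹ : G))⁻¹ := by
        push_cast
        group
      rw [commutatorElement_def, this]
      exact (s _).inv_mem hmem
    · have h1 : n - k = 0 := by omega
      have h2 : n - (k + 1) = 0 := by omega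
      have hzero : (⟨n - k, by omega⟩ : Fin (n + 1)) = 0 := by ext; simp [h1]
      rw [hzero, h0, Subgroup.mem_bot] at hx
      have hx1 : x = 1 := Subtype.ext hx
      have hzero2 : (⟨n - (k + 1), by omega⟩ : Fin (n + 1)) = 0 := by ext; simp [h2]
      rw [hzero2, h0]
      simp [hx1]
  · have h : (⟨n - n, by omega⟩ : Fin (n + 1)) = 0 := by ext; simp
    show (s ⟨n - n, by omega⟩).subgroupOf H = ⊥
    rw [h, h0, Subgroup.bot_subgroupOf]

end AuxLemmas

/-- If the finite group `G = AB` is the product of supersoluble subgroups `A` and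
`B`, then the derived subgroup of `G/[A,B]` is nilpotent.  (The subgroup `[A,B]`
is normal in `G` in this situation; normality is recorded as a hypothesis in
order to form the quotient.) -/
theorem isNilpotent_derived_quotient_commutator
    {G : Type u} [Group G] [Finite G] (A B : Subgroup G)
    (hprod : (A : Set G) * (B : Set G) = Set.univ)
    (hA : IsSupersoluble ↥A) (hB : IsSupersoluble ↥B)
    (hN : (⁅A, B⁆ : Subgroup G).Normal) :
    Group.IsNilpotent ↥(commutator (G ⧸ (⁅A, B⁆ : Subgroup G))) := by
  classical
  haveI := hN
  set N : Subgroup G := ⁅A, B⁆ with hNdef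
  set π := QuotientGroup.mk' N with hπ
  -- the images of A and B commute elementwise in the quotient
  have hcomm : ∀ (a : ↥A) (b : ↥B),
      Commute ((π.comp A.subtype) a) ((π.comp B.subtype) b) := by
    intro a b
    have hmem : (⁅(a : G), (b : G)⁆ : G) ∈ N :=
      Subgroup.commutator_mem_commutator a.2 b.2
    have h1 : π ⁅(a : G), (b : G)⁆ = 1 := by
      rw [hπ, QuotientGroup.mk'_apply, QuotientGroup.eq_one_iff]
      exact hmem
    rw [map_commutatorElement] at h1
    exact commutatorElement_eq_one_iff_commute.mp h1
  set F : ↥A × ↥B →* G ⧸ N :=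
    MonoidHom.noncommCoprod (π.comp A.subtype) (π.comp B.subtype) hcomm with hF
  have hsurj : Function.Surjective F := by
    intro q
    obtain ⟨g, rfl⟩ := QuotientGroup.mk'_surjective N q
    have hg : g ∈ (A : Set G) * (B : Set G) := by rw [hprod]; trivial
    obtain ⟨a, ha, b, hb, hab⟩ := hg
    refine ⟨(⟨a, ha⟩, ⟨b, hb⟩), ?_⟩
    show π a * π b = π g
    rw [← map_mul]
    exact congrArg π hab
  -- the derived subgroup of the quotient is the image of the derived subgroup of A × B
  have hmap : Subgroup.map F (commutator (↥A × ↥B)) = commutator (G ⧸ N) := by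
    rw [commutator_def, commutator_def, Subgroup.map_commutator,
      Subgroup.map_top_of_surjective F hsurj]
  have hprodcomm : commutator (↥A × ↥B)
      = (commutator ↥A).prod (commutator ↥B) := by
    rw [commutator_def, commutator_def, commutator_def, ← Subgroup.top_prod_top,
      Subgroup.commutator_prod_prod]
  haveI hnA : Group.IsNilpotent ↥(commutator ↥A) :=
    isNilpotent_commutator_of_isSupersoluble hA
  haveI hnB : Group.IsNilpotent ↥(commutator ↥B) :=
    isNilpotent_commutator_of_isSupersoluble hB
  haveI hnprod : Group.IsNilpotent ↥((commutator ↥A).prod (commutator ↥B)) := by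
    have e := Subgroup.prodEquiv (commutator ↥A) (commutator ↥B)
    exact nilpotent_of_surjective e.symm.toMonoidHom e.symm.surjective
  rw [← hmap, hprodcomm]
  exact nilpotent_of_surjective (F.subgroupMap _) (F.subgroupMap_surjective _)
end
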